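/- Let ξ, η ∈ ℂⁿ with ξ ≠ 0. There exists a positive semidefinite matrix A ∈ ℂⁿˣⁿ with Aξ = η if and only if ξ*η > 0 (i.e., ξ*η is a positive real number) or η = 0. -/

import Mathlib

open Matrix
open scoped ComplexOrder

theorem stmt_0 (n : ℕ) (ξ η : Fin n → ℂ) (hξ : ξ ≠ 0) :
    (∃ A : Matrix (Fin n) (Fin n) ℂ, A.PosSemidef ∧ A.mulVec ξ = η) ↔
      ((∃ r : ℝ, 0 < r ∧ dotProduct (star ξ) η = (r : ℂ)) ∨ η = 0) := by
  constructor
  · rintro ⟨A, hA, rfl⟩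
    have h0 : 0 ≤ star ξ ⬝ᵥ A *ᵥ ξ := hA.dotProduct_mulVec_nonneg ξ
    rcases eq_or_lt_of_le h0 with h | h
    · right
      exact (hA.dotProduct_mulVec_zero_iff ξ).mp h.symm
    · left
      obtain ⟨h1, h2⟩ := Complex.pos_iff.mp h
      refine ⟨(star ξ ⬝ᵥ A *ᵥ ξ).re, by simpa using h1, ?_⟩
      exact Complex.ext (by simp) (by simp [← h2])
  · rintro (⟨r, hr, hdot⟩ | rfl)
    · set A : Matrix (Fin n) (Fin n) ℂ :=
        Matrix.of fun i j => (r : ℂ)⁻¹ * (η i * star (η j)) with hAdef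
      have hrne : (r : ℂ) ≠ 0 := by exact_mod_cast hr.ne'
      refine ⟨A, PosSemidef.of_dotProduct_mulVec_nonneg ?_ ?_, ?_⟩
      · ext i j
        simp [hAdef, conjTranspose_apply, mul_comm]
      · intro x
        have hst : star η ⬝ᵥ x = star (star x ⬝ᵥ η) := by
          rw [star_dotProduct]
        have key : star x ⬝ᵥ A *ᵥ x
            = (r : ℂ)⁻¹ * ((star x ⬝ᵥ η) * star (star x ⬝ᵥ η)) := by
          rw [← hst]
          simp only [hAdef, dotProduct, mulVec, of_apply, Pi.star_apply, Finset.mul_sum,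
            Finset.sum_mul]
          rw [Finset.sum_comm]
          refine Finset.sum_congr rfl fun j _ => Finset.sum_congr rfl fun i _ => by ring
        rw [key]
        have h1 : 0 ≤ (star x ⬝ᵥ η) * star (star x ⬝ᵥ η) :=
          mul_star_self_nonneg _
        have h2 : 0 ≤ ((r : ℂ)⁻¹) := by
          rw [show ((r:ℂ)⁻¹) = ((r⁻¹ : ℝ) : ℂ) by push_cast; ring]
          exact_mod_cast (inv_nonneg.mpr hr.le)
        exact mul_nonneg h2 h1
      · have hηξ : star η ⬝ᵥ ξ = (r : ℂ) := by
          rw [star_dotProduct, hdot]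
          exact Complex.conj_ofReal r
        funext i
        have key : (A *ᵥ ξ) i = (r : ℂ)⁻¹ * η i * (star η ⬝ᵥ ξ) := by
          simp only [hAdef, mulVec, dotProduct, of_apply, Pi.star_apply, Finset.mul_sum]
          exact Finset.sum_congr rfl fun j _ => by ring
        rw [key, hηξ]
        field_simp
    · exact ⟨0, Matrix.PosSemidef.zero, by simp⟩
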